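/- Let $h : [T,+\infty) \to (0,R]$ (where $R = h(T)$) be the strictly decreasing continuous bijection $h(t) = \int_t^{+\infty} c(t_1)e^{-t_1}dt_1$ for a positive continuous $c$ with finite integral, and let $H : [T,+\infty) \to \mathbb{R}$ be nonincreasing with $H(T) < +\infty$ and $H \ge 0$. Suppose that for all $T \le t_0 < t_1$, $\frac{H(t_0) - H(t_1)}{h(t_0) - h(t_1)} \le \liminf_{B \to 0^+} \frac{H(t_1) - H(t_1 + B)}{h(t_1) - h(t_1+B)}$, and suppose $r \mapsto H(h^{-1}(r))$ is lower semicontinuous on $(0,R]$. Then $r \mapsto H(h^{-1}(r))$ is concave on $(0,R]$. -/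

import Mathlib

open Set Filter Topology MeasureTheory

lemma lsc_exists_min {a b : ℝ} (hab : a ≤ b) {φ : ℝ → ℝ}
    (hφ : LowerSemicontinuousOn φ (Set.Icc a b))
    (hbd : BddBelow (φ '' Set.Icc a b)) :
    ∃ m ∈ Set.Icc a b, ∀ x ∈ Set.Icc a b, φ m ≤ φ x := by
  set i := sInf (φ '' Set.Icc a b) with hi
  have hne : (φ '' Set.Icc a b).Nonempty := ⟨φ a, a, ⟨le_refl a, hab⟩, rfl⟩
  have hseq : ∀ n : ℕ, ∃ x ∈ Set.Icc a b, φ x < i + 1 / (n + 1) := by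
    intro n
    have hlt : i < i + 1 / (n + 1) := lt_add_of_pos_right _ (by positivity)
    obtain ⟨y, ⟨x, hx, rfl⟩, hyl⟩ := exists_lt_of_csInf_lt hne hlt
    exact ⟨x, hx, hyl⟩
  choose x hx hφx using hseq
  obtain ⟨m, hm, ψ, hψ, hlim⟩ := isCompact_Icc.tendsto_subseq hx
  refine ⟨m, hm, fun z hz => ?_⟩
  have hmi : φ m ≤ i := by
    by_contra hc
    push_neg at hc
    obtain ⟨y, hy1, hy2⟩ := exists_between hc
    have hev : ∀ᶠ x' in 𝓝[Set.Icc a b] m, y < φ x' := hφ m hm y hy2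
    have hlim' : Tendsto (fun n => x (ψ n)) atTop (𝓝[Set.Icc a b] m) := by
      rw [tendsto_nhdsWithin_iff]
      exact ⟨hlim, Filter.Eventually.of_forall fun n => hx (ψ n)⟩
    have h1 : ∀ᶠ n in atTop, y < φ (x (ψ n)) := hlim'.eventually hev
    have h2 : ∀ᶠ n in atTop, φ (x (ψ n)) < y := by
      have htend : Tendsto (fun n : ℕ => i + 1 / ((n : ℝ) + 1)) atTop (𝓝 i) := by
        have : Tendsto (fun n : ℕ => 1 / ((n : ℝ) + 1)) atTop (𝓝 0) :=
          tendsto_one_div_add_atTop_nhds_zero_nat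
        simpa using tendsto_const_nhds.add this
      filter_upwards [htend.eventually_lt_const hy1] with n hn
      calc φ (x (ψ n)) < i + 1 / ((ψ n : ℝ) + 1) := hφx (ψ n)
        _ ≤ i + 1 / ((n : ℝ) + 1) := by
            gcongr
            exact_mod_cast hψ.le_apply
        _ < y := hn
    obtain ⟨n, hn1, hn2⟩ := (h1.and h2).exists
    linarith
  exact hmi.trans (csInf_le hbd ⟨z, hz, rfl⟩)

theorem stmt13 (T : ℝ) (c : ℝ → ℝ)
    (hc_cont : ContinuousOn c (Set.Ioi T))
    (hc_pos : ∀ t ∈ Set.Ioi T, 0 < c t)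
    (hc_int : MeasureTheory.IntegrableOn (fun t => c t * Real.exp (-t)) (Set.Ioi T))
    (h : ℝ → ℝ)
    (hh : ∀ t ∈ Set.Ici T, h t = ∫ t₁ in Set.Ioi t, c t₁ * Real.exp (-t₁))
    (hinv : ℝ → ℝ)
    (hinv_on : Set.InvOn hinv h (Set.Ici T) (Set.Ioc 0 (h T)))
    (H : ℝ → ℝ)
    (hH_anti : AntitoneOn H (Set.Ici T))
    (hH_nonneg : ∀ t ∈ Set.Ici T, 0 ≤ H t)
    (hdiff : ∀ t₀ t₁, T ≤ t₀ → t₀ < t₁ →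
      (H t₀ - H t₁) / (h t₀ - h t₁) ≤
        Filter.liminf (fun B => (H t₁ - H (t₁ + B)) / (h t₁ - h (t₁ + B)))
          (nhdsWithin 0 (Set.Ioi 0)))
    (hlsc : LowerSemicontinuousOn (fun r => H (hinv r)) (Set.Ioc 0 (h T))) :
    ConcaveOn ℝ (Set.Ioc 0 (h T)) (fun r => H (hinv r)) := by
  set f : ℝ → ℝ := fun t => c t * Real.exp (-t) with hfdef
  set G : ℝ → ℝ := fun r => H (hinv r) with hGdef
  have hf_pos : ∀ x ∈ Set.Ioi T, 0 < f x := fun x hx => mul_pos (hc_pos x hx) (Real.exp_pos _)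
  have hf_int : ∀ s, T ≤ s → MeasureTheory.IntegrableOn f (Set.Ioi s) := fun s hs =>
    hc_int.mono_set (Set.Ioi_subset_Ioi hs)
  -- splitting of the integral
  have hsplit : ∀ s t, T ≤ s → s ≤ t → h s = (∫ x in Set.Ioc s t, f x) + h t := by
    intro s t hs hst
    rw [hh s hs, hh t (hs.trans hst)]
    rw [← MeasureTheory.setIntegral_union (Set.Ioc_disjoint_Ioi le_rfl) measurableSet_Ioi
      ((hf_int s hs).mono_set Set.Ioc_subset_Ioi_self) (hf_int t (hs.trans hst)),
      Set.Ioc_union_Ioi_eq_Ioi hst]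
  -- positivity of increments
  have hinc : ∀ s t, T ≤ s → s < t → 0 < ∫ x in Set.Ioc s t, f x := by
    intro s t hs hst
    have hii : IntervalIntegrable f MeasureTheory.volume s t := by
      rw [intervalIntegrable_iff_integrableOn_Ioc_of_le hst.le]
      exact (hf_int s hs).mono_set Set.Ioc_subset_Ioi_self
    have := intervalIntegral.intervalIntegral_pos_of_pos_on hii
      (fun x hx => hf_pos x (hs.trans_lt hx.1)) hst
    rwa [intervalIntegral.integral_of_le hst.le] at this
  have h_nonneg : ∀ t, T ≤ t → 0 ≤ h t := by
    intro t ht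
    rw [hh t ht]
    exact MeasureTheory.setIntegral_nonneg measurableSet_Ioi
      (fun x hx => (hf_pos x (Set.Ioi_subset_Ioi ht hx)).le)
  have h_pos : ∀ t, T ≤ t → 0 < h t := by
    intro t ht
    have h1 := hsplit t (t + 1) ht (by linarith)
    have h2 := hinc t (t + 1) ht (by linarith)
    have h3 := h_nonneg (t + 1) (by linarith)
    linarith
  have h_anti : ∀ s t, T ≤ s → s < t → h t < h s := by
    intro s t hs hst
    have h1 := hsplit s t hs hst.le
    have h2 := hinc s t hs hst
    linarith
  -- continuity of h on [T, ∞)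
  set g : ℝ → ℝ := Set.indicator (Set.Ioi T) f with hgdef
  have hg_int : MeasureTheory.Integrable g := by
    rw [hgdef, MeasureTheory.integrable_indicator_iff measurableSet_Ioi]
    exact hc_int
  have hg_ii : ∀ a b : ℝ, IntervalIntegrable g MeasureTheory.volume a b :=
    fun a b => hg_int.intervalIntegrable
  have hP_cont : Continuous (fun t => ∫ x in T..t, g x) :=
    intervalIntegral.continuous_primitive hg_ii T
  have h_eq : ∀ t, T ≤ t → h t = h T - ∫ x in T..t, g x := by
    intro t ht
    have hs := hsplit T t le_rfl ht
    have heq : (∫ x in T..t, g x) = ∫ x in Set.Ioc T t, f x := by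
      rw [intervalIntegral.integral_of_le ht, hgdef,
        MeasureTheory.setIntegral_indicator measurableSet_Ioi,
        Set.inter_eq_left.mpr (fun x hx => hx.1)]
    linarith
  have h_contOn : ContinuousOn h (Set.Ici T) := by
    have hc : ContinuousOn (fun t => h T - ∫ x in T..t, g x) (Set.Ici T) :=
      (continuous_const.sub hP_cont).continuousOn
    exact hc.congr (fun t ht => h_eq t ht)
  -- h tends to 0 at infinity
  have h_lim : Filter.Tendsto h Filter.atTop (nhds 0) := by
    have h1 : Filter.Tendsto (fun t : ℝ => ∫ x in T..t, g x) Filter.atTop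
        (nhds (∫ x in Set.Ioi T, g x)) :=
      MeasureTheory.intervalIntegral_tendsto_integral_Ioi T hg_int.integrableOn Filter.tendsto_id
    have h2 : (∫ x in Set.Ioi T, g x) = h T := by
      rw [hh T Set.self_mem_Ici, hgdef, MeasureTheory.setIntegral_indicator measurableSet_Ioi,
        Set.inter_self]
    rw [h2] at h1
    have h3 : Filter.Tendsto (fun t : ℝ => h T - ∫ x in T..t, g x) Filter.atTop (nhds 0) := by
      have hcst : Filter.Tendsto (fun _ : ℝ => h T) Filter.atTop (nhds (h T)) := tendsto_const_nhds
      simpa using hcst.sub h1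
    apply h3.congr'
    filter_upwards [Filter.eventually_ge_atTop T] with t ht using (h_eq t ht).symm
  -- surjectivity onto (0, h T]
  have h_surj : ∀ r ∈ Set.Ioc 0 (h T), ∃ t, T ≤ t ∧ h t = r := by
    intro r hr
    obtain ⟨M, hM1, hM2⟩ : ∃ M, T ≤ M ∧ h M < r := by
      have hev := (h_lim.eventually_lt_const hr.1).and (Filter.eventually_ge_atTop T)
      obtain ⟨M, hM⟩ := hev.exists
      exact ⟨M, hM.2, hM.1⟩
    have hsub : Set.Icc (h M) (h T) ⊆ h '' Set.Icc T M :=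
      intermediate_value_Icc' hM1 (h_contOn.mono Set.Icc_subset_Ici_self)
    obtain ⟨t, ht, hth⟩ := hsub ⟨hM2.le, hr.2⟩
    exact ⟨t, ht.1, hth⟩
  have hinv_mem : ∀ r ∈ Set.Ioc 0 (h T), T ≤ hinv r ∧ h (hinv r) = r := by
    intro r hr
    obtain ⟨t, ht, rfl⟩ := h_surj r hr
    rw [hinv_on.1 ht]
    exact ⟨ht, rfl⟩
  -- the key chord inequality
  have key : ∀ a ∈ Set.Ioc 0 (h T), ∀ b ∈ Set.Ioc 0 (h T), a < b →
      ∀ z ∈ Set.Icc a b, G a + (G b - G a) / (b - a) * (z - a) ≤ G z := by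
    intro a ha b hb hab z hz
    by_contra hcon
    push_neg at hcon
    set s : ℝ := (G b - G a) / (b - a) with hsdef
    set φ : ℝ → ℝ := fun r => G r - (G a + s * (r - a)) with hφdef
    have hIcc_sub : Set.Icc a b ⊆ Set.Ioc 0 (h T) := fun x hx =>
      ⟨lt_of_lt_of_le ha.1 hx.1, hx.2.trans hb.2⟩
    have hG_nonneg : ∀ r ∈ Set.Icc a b, 0 ≤ G r := fun r hr =>
      hH_nonneg _ (hinv_mem r (hIcc_sub hr)).1
    have hφa : φ a = 0 := by simp [hφdef]
    have hsb : s * (b - a) = G b - G a := div_mul_cancel₀ _ (sub_ne_zero.mpr hab.ne')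
    have hφb : φ b = 0 := by simp only [hφdef]; linarith
    have hφz : φ z < 0 := by simp only [hφdef]; linarith
    have hφ_lsc : LowerSemicontinuousOn φ (Set.Icc a b) := by
      have h1 : LowerSemicontinuousOn G (Set.Icc a b) := hlsc.mono hIcc_sub
      have h2 : LowerSemicontinuousOn (fun r : ℝ => -(G a + s * (r - a))) (Set.Icc a b) := by
        have hcont : Continuous (fun r : ℝ => -(G a + s * (r - a))) :=
          (continuous_const.add (continuous_const.mul (continuous_id.sub continuous_const))).neg
        exact hcont.continuousOn.lowerSemicontinuousOn
      have := h1.add h2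
      simpa [hφdef, sub_eq_add_neg] using this
    have hbdd : BddBelow (φ '' Set.Icc a b) := by
      refine ⟨-(|G a| + |s| * (b - a)), ?_⟩
      rintro _ ⟨r, hr, rfl⟩
      have h0 : 0 ≤ G r := hG_nonneg r hr
      have h1 : s * (r - a) ≤ |s| * (b - a) :=
        calc s * (r - a) ≤ |s| * (r - a) :=
              mul_le_mul_of_nonneg_right (le_abs_self s) (by linarith [hr.1])
          _ ≤ |s| * (b - a) := mul_le_mul_of_nonneg_left (by linarith [hr.2]) (abs_nonneg s)
      have h2 := le_abs_self (G a)
      simp only [hφdef]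
      linarith
    obtain ⟨m, hm, hmin⟩ := lsc_exists_min hab.le hφ_lsc hbdd
    have hφm : φ m < 0 := lt_of_le_of_lt (hmin z hz) hφz
    have ham : a < m := lt_of_le_of_ne hm.1 (fun hh' => by rw [← hh'] at hφm; linarith)
    have hmb : m < b := lt_of_le_of_ne hm.2 (fun hh' => by rw [hh'] at hφm; linarith)
    have hmI : m ∈ Set.Ioc 0 (h T) := hIcc_sub hm
    obtain ⟨ht₁T, ht₁⟩ := hinv_mem m hmI
    obtain ⟨ht₀T, ht₀⟩ := hinv_mem b hb
    set t₀ : ℝ := hinv b with ht₀def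
    set t₁ : ℝ := hinv m with ht₁def
    have ht01 : t₀ < t₁ := by
      rcases lt_trichotomy t₀ t₁ with h' | h' | h'
      · exact h'
      · rw [h', ht₁] at ht₀; linarith
      · have := h_anti t₁ t₀ ht₁T h'
        rw [ht₀, ht₁] at this; linarith
    have main := hdiff t₀ t₁ ht₀T ht01
    have hLHS : s < (H t₀ - H t₁) / (h t₀ - h t₁) := by
      have hGb : H t₀ = G b := by rw [hGdef]
      have hGm : H t₁ = G m := by rw [hGdef]
      rw [ht₀, ht₁, hGb, hGm, lt_div_iff₀ (by linarith : (0:ℝ) < b - m)]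
      have e1 : φ m < 0 := hφm
      simp only [hφdef] at e1
      nlinarith
    have hRHS : Filter.liminf (fun B => (H t₁ - H (t₁ + B)) / (h t₁ - h (t₁ + B)))
        (nhdsWithin 0 (Set.Ioi 0)) ≤ s := by
      have htend : Tendsto (fun B : ℝ => t₁ + B) (𝓝[>] (0:ℝ)) (𝓝[Set.Ici T] t₁) := by
        rw [tendsto_nhdsWithin_iff]
        constructor
        · have hc0 : Tendsto (fun B : ℝ => t₁ + B) (𝓝 (0:ℝ)) (𝓝 t₁) := by
            exact (continuous_const.add continuous_id : Continuous fun B : ℝ => t₁ + B).tendsto' 0 t₁ (add_zero t₁)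
          exact hc0.mono_left nhdsWithin_le_nhds
        · filter_upwards [self_mem_nhdsWithin] with B (hB : B ∈ Set.Ioi 0)
          exact le_trans ht₁T (by linarith [hB.out])
      have hcomp : Tendsto (fun B : ℝ => h (t₁ + B)) (𝓝[>] (0:ℝ)) (𝓝 m) := by
        have hc : ContinuousWithinAt h (Set.Ici T) t₁ := h_contOn t₁ ht₁T
        have := hc.tendsto.comp htend
        rwa [ht₁] at this
      have hev_lt : ∀ᶠ B in 𝓝[>] (0:ℝ), (H t₁ - H (t₁ + B)) / (h t₁ - h (t₁ + B)) ≤ s := by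
        filter_upwards [hcomp.eventually_const_lt ham, self_mem_nhdsWithin] with B hB1 hB2
        have hB0 : (0:ℝ) < B := hB2
        have hlt : h (t₁ + B) < m := by
          have := h_anti t₁ (t₁ + B) ht₁T (by linarith)
          rwa [ht₁] at this
        have hr'mem : h (t₁ + B) ∈ Set.Icc a b := ⟨hB1.le, by linarith [hm.2]⟩
        have hGr' : G (h (t₁ + B)) = H (t₁ + B) := by
          rw [hGdef]
          simp only
          rw [hinv_on.1 (show t₁ + B ∈ Set.Ici T from by
            simp only [Set.mem_Ici]; linarith)]
        have hGm : G m = H t₁ := by rw [hGdef]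
        have hmin' := hmin _ hr'mem
        simp only [hφdef] at hmin'
        rw [hGr', hGm] at hmin'
        rw [ht₁, div_le_iff₀ (by linarith : (0:ℝ) < m - h (t₁ + B))]
        nlinarith
      have hev_nonneg : ∀ᶠ B in 𝓝[>] (0:ℝ),
          (0:ℝ) ≤ (H t₁ - H (t₁ + B)) / (h t₁ - h (t₁ + B)) := by
        filter_upwards [self_mem_nhdsWithin] with B (hB : B ∈ Set.Ioi 0)
        have hB0 : (0:ℝ) < B := hB
        have h1 : h (t₁ + B) < h t₁ := h_anti t₁ (t₁ + B) ht₁T (by linarith)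
        have h2 : H (t₁ + B) ≤ H t₁ :=
          hH_anti ht₁T (by simp only [Set.mem_Ici]; linarith) (by linarith)
        exact div_nonneg (by linarith) (by linarith)
      refine Filter.liminf_le_of_frequently_le hev_lt.frequently ⟨0, ?_⟩
      rw [Filter.eventually_map]
      exact hev_nonneg
    linarith
  -- conclude concavity
  refine ⟨convex_Ioc 0 (h T), ?_⟩
  intro x hx y hy p q hp hq hpq
  rcases lt_trichotomy x y with hxy | hxy | hxy
  · have h1 : 0 ≤ q * (y - x) := mul_nonneg hq (by linarith)
    have h2 : 0 ≤ p * (y - x) := mul_nonneg hp (by linarith)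
    have hzx : p * x + q * y - x = q * (y - x) := by linear_combination x * hpq
    have hzy : y - (p * x + q * y) = p * (y - x) := by linear_combination (-y) * hpq
    have hz : p * x + q * y ∈ Set.Icc x y := by
      constructor
      · linarith
      · linarith
    have hk := key x hx y hy hxy _ hz
    have hne : y - x ≠ 0 := sub_ne_zero.mpr hxy.ne'
    have hdm : (G y - G x) / (y - x) * (p * x + q * y - x) = q * (G y - G x) := by
      rw [hzx]; field_simp
    rw [hdm] at hk
    simp only [smul_eq_mul]
    have hp' : p = 1 - q := by linarith
    have heq : p * G x + q * G y = G x + q * (G y - G x) := by rw [hp']; ring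
    rw [heq]
    exact hk
  · subst hxy
    have hz : p * x + q * x = x := by rw [← add_mul, hpq, one_mul]
    simp only [smul_eq_mul, hz]
    have : p * G x + q * G x = G x := by rw [← add_mul, hpq, one_mul]
    rw [this]
  · have h1 : 0 ≤ q * (x - y) := mul_nonneg hq (by linarith)
    have h2 : 0 ≤ p * (x - y) := mul_nonneg hp (by linarith)
    have hzx : q * y + p * x - y = p * (x - y) := by linear_combination y * hpq
    have hzy : x - (q * y + p * x) = q * (x - y) := by linear_combination (-x) * hpq
    have hz : q * y + p * x ∈ Set.Icc y x := by
      constructor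
      · linarith
      · linarith
    have hk := key y hy x hx hxy _ hz
    have hne : x - y ≠ 0 := sub_ne_zero.mpr hxy.ne'
    have hdm : (G x - G y) / (x - y) * (q * y + p * x - y) = p * (G x - G y) := by
      rw [hzx]; field_simp
    rw [hdm] at hk
    simp only [smul_eq_mul]
    rw [show p * x + q * y = q * y + p * x from by ring]
    have hq' : q = 1 - p := by linarith
    have heq : p * G x + q * G y = G y + p * (G x - G y) := by rw [hq']; ring
    rw [heq]
    exact hk
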